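/- For k ≥ 4, the maximum over all pairs (B, x) with B ⊆ Z_k and x ∈ Z_k, (B, x) ≠ (∅, 0), of the minimum length of a valid path from 0 to x covering B in the marked cycle on Z_k, equals k + ⌊k/2⌋ − 2. -/

import Mathlib

/-- The four move types in the marked cycle. -/
inductive Move : Type
  | a | b | c | d
deriving DecidableEq

/-- Where a move from node `x` in `ZMod k` leads. -/
def Move.step {k : ℕ} (x : ZMod k) : Move → ZMod k
  | .a => x - 1
  | .b => x
  | .c => x + 1
  | .d => x

/-- The node covered by a move performed from node `x`. -/
def Move.covers {k : ℕ} (x : ZMod k) : Move → ZMod k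
  | .a => x - 1
  | .b => x
  | .c => x
  | .d => x - 1

/-- The node reached after performing a sequence of moves starting at `s`. -/
def endAt {k : ℕ} (s : ZMod k) : List Move → ZMod k
  | [] => s
  | m :: ms => endAt (Move.step s m) ms

/-- The set of nodes covered by a sequence of moves starting at `s`. -/
def coveredSet {k : ℕ} (s : ZMod k) : List Move → Set (ZMod k)
  | [] => ∅
  | m :: ms => insert (Move.covers s m) (coveredSet (Move.step s m) ms)

/-- A valid path in the marked cycle on `ZMod k` with marked set `B`, start `s`,
end `t`: a nonempty sequence of moves from `s` to `t` covering every node of `B`. -/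
def ValidPath {k : ℕ} (B : Set (ZMod k)) (s t : ZMod k) (p : List Move) : Prop :=
  p ≠ [] ∧ endAt s p = t ∧ B ⊆ coveredSet s p

/-- A shortest valid path: valid and of minimum length among all valid paths. -/
def ShortestPath {k : ℕ} (B : Set (ZMod k)) (s t : ZMod k) (p : List Move) : Prop :=
  ValidPath B s t p ∧ ∀ q : List Move, ValidPath B s t q → p.length ≤ q.length

/- ### Integer lift -/

def stepZ (x : ℤ) : Move → ℤ
  | .a => x - 1
  | .b => x
  | .c => x + 1
  | .d => x

def coversZ (x : ℤ) : Move → ℤ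
  | .a => x - 1
  | .b => x
  | .c => x
  | .d => x - 1

def endZ (s : ℤ) : List Move → ℤ
  | [] => s
  | m :: ms => endZ (stepZ s m) ms

def covZ (s : ℤ) : List Move → Set ℤ
  | [] => ∅
  | m :: ms => insert (coversZ s m) (covZ (stepZ s m) ms)

def hiZ (s : ℤ) : List Move → ℤ
  | [] => s
  | m :: ms => max s (hiZ (stepZ s m) ms)

def loZ (s : ℤ) : List Move → ℤ
  | [] => s
  | m :: ms => min s (loZ (stepZ s m) ms)

lemma cast_stepZ {k : ℕ} (s : ℤ) (m : Move) :
    ((stepZ s m : ℤ) : ZMod k) = Move.step (s : ZMod k) m := by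
  cases m <;> simp [stepZ, Move.step]

lemma cast_coversZ {k : ℕ} (s : ℤ) (m : Move) :
    ((coversZ s m : ℤ) : ZMod k) = Move.covers (s : ZMod k) m := by
  cases m <;> simp [coversZ, Move.covers]

lemma cast_endZ {k : ℕ} (p : List Move) (s : ℤ) :
    ((endZ s p : ℤ) : ZMod k) = endAt (s : ZMod k) p := by
  induction p generalizing s with
  | nil => rfl
  | cons m ms ih => rw [endZ, endAt, ← cast_stepZ, ih]

lemma mem_covZ_cast {k : ℕ} (p : List Move) (s z : ℤ) (hz : z ∈ covZ s p) :
    ((z : ℤ) : ZMod k) ∈ coveredSet (s : ZMod k) p := by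
  induction p generalizing s with
  | nil => exact absurd hz (by simp [covZ])
  | cons m ms ih =>
    rw [covZ] at hz
    rw [coveredSet]
    rcases hz with hz | hz
    · left; rw [hz, cast_coversZ]
    · right; rw [← cast_stepZ]; exact ih _ hz

lemma coveredSet_subset_cast {k : ℕ} (p : List Move) (s : ℤ) :
    coveredSet (s : ZMod k) p ⊆ (fun z : ℤ => (z : ZMod k)) '' covZ s p := by
  induction p generalizing s with
  | nil => simp [coveredSet]
  | cons m ms ih =>
    rw [coveredSet, covZ]
    intro r hr
    rcases hr with hr | hr
    · exact ⟨coversZ s m, Set.mem_insert _ _, by show ((coversZ s m : ℤ) : ZMod k) = r; rw [cast_coversZ]; exact hr.symm⟩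
    · rw [← cast_stepZ] at hr
      obtain ⟨z, hz, hcast⟩ := ih (stepZ s m) hr
      exact ⟨z, Set.mem_insert_of_mem _ hz, hcast⟩

lemma endZ_append (p q : List Move) (s : ℤ) :
    endZ s (p ++ q) = endZ (endZ s p) q := by
  induction p generalizing s with
  | nil => rfl
  | cons m ms ih => rw [List.cons_append, endZ, endZ, ih]

lemma covZ_append (p q : List Move) (s : ℤ) :
    covZ s (p ++ q) = covZ s p ∪ covZ (endZ s p) q := by
  induction p generalizing s with
  | nil => simp [covZ, endZ]
  | cons m ms ih => rw [List.cons_append, covZ, covZ, endZ, ih, Set.insert_union]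

lemma endZ_replicate_c (n : ℕ) (s : ℤ) : endZ s (List.replicate n .c) = s + n := by
  induction n generalizing s with
  | zero => simp [endZ]
  | succ n ih => rw [List.replicate_succ, endZ, ih]; simp [stepZ]; ring

lemma endZ_replicate_a (n : ℕ) (s : ℤ) : endZ s (List.replicate n .a) = s - n := by
  induction n generalizing s with
  | zero => simp [endZ]
  | succ n ih => rw [List.replicate_succ, endZ, ih]; simp [stepZ]; ring

lemma covZ_replicate_c (n : ℕ) (s : ℤ) :
    covZ s (List.replicate n .c) = Set.Ico s (s + n) := by
  induction n generalizing s with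
  | zero => simp [covZ]
  | succ n ih =>
    rw [List.replicate_succ, covZ, ih]
    simp only [coversZ, stepZ]
    ext z
    simp only [Set.mem_insert_iff, Set.mem_Ico]
    push_cast
    omega

lemma covZ_replicate_a (n : ℕ) (s : ℤ) :
    covZ s (List.replicate n .a) = Set.Ico (s - n) s := by
  induction n generalizing s with
  | zero => simp [covZ]
  | succ n ih =>
    rw [List.replicate_succ, covZ, ih]
    simp only [coversZ, stepZ]
    ext z
    simp only [Set.mem_insert_iff, Set.mem_Ico]
    push_cast
    omega

/- ### Walk bounds -/

lemma loZ_le_self (p : List Move) (s : ℤ) : loZ s p ≤ s := by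
  cases p with
  | nil => exact le_refl s
  | cons m ms => exact min_le_left _ _

lemma self_le_hiZ (p : List Move) (s : ℤ) : s ≤ hiZ s p := by
  cases p with
  | nil => exact le_refl s
  | cons m ms => exact le_max_left _ _

lemma loZ_le_endZ (p : List Move) (s : ℤ) : loZ s p ≤ endZ s p := by
  induction p generalizing s with
  | nil => exact le_refl s
  | cons m ms ih => exact le_trans (min_le_right _ _) (ih _)

lemma endZ_le_hiZ (p : List Move) (s : ℤ) : endZ s p ≤ hiZ s p := by
  induction p generalizing s with
  | nil => exact le_refl s
  | cons m ms ih => exact le_trans (ih _) (le_max_right _ _)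

lemma covZ_subset (p : List Move) (s : ℤ) :
    covZ s p ⊆ Set.Icc (loZ s p - 1) (hiZ s p) := by
  induction p generalizing s with
  | nil => simp [covZ]
  | cons m ms ih =>
    rw [covZ, loZ, hiZ]
    intro z hz
    rcases hz with hz | hz
    · have h1 : coversZ s m = s ∨ coversZ s m = s - 1 := by cases m <;> simp [coversZ]
      constructor
      · rcases h1 with h | h <;> rw [hz, h] <;> simp <;> omega
      · rcases h1 with h | h <;> rw [hz, h] <;> simp <;> omega
    · have := ih (stepZ s m) hz
      rw [Set.mem_Icc] at this ⊢
      constructor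
      · calc min s (loZ (stepZ s m) ms) - 1 ≤ loZ (stepZ s m) ms - 1 := by
              have := min_le_right s (loZ (stepZ s m) ms); omega
          _ ≤ z := this.1
      · exact le_trans this.2 (le_max_right _ _)

lemma exists_take_hiZ (p : List Move) (s : ℤ) :
    ∃ i ≤ p.length, endZ s (p.take i) = hiZ s p := by
  induction p generalizing s with
  | nil => exact ⟨0, le_refl _, rfl⟩
  | cons m ms ih =>
    obtain ⟨i, hle, heq⟩ := ih (stepZ s m)
    rcases le_total s (hiZ (stepZ s m) ms) with h | h
    · refine ⟨i + 1, by simpa using hle, ?_⟩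
      rw [List.take_succ_cons, endZ, heq, hiZ, max_eq_right h]
    · refine ⟨0, by simp, ?_⟩
      show s = hiZ s (m :: ms)
      rw [hiZ, max_eq_left h]

lemma exists_take_loZ (p : List Move) (s : ℤ) :
    ∃ i ≤ p.length, endZ s (p.take i) = loZ s p := by
  induction p generalizing s with
  | nil => exact ⟨0, le_refl _, rfl⟩
  | cons m ms ih =>
    obtain ⟨i, hle, heq⟩ := ih (stepZ s m)
    rcases le_total (loZ (stepZ s m) ms) s with h | h
    · refine ⟨i + 1, by simpa using hle, ?_⟩
      rw [List.take_succ_cons, endZ, heq, loZ, min_eq_right h]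
    · refine ⟨0, by simp, ?_⟩
      show s = loZ s (m :: ms)
      rw [loZ, min_eq_left h]

/-- Unit moves bound the displacement. -/
lemma natAbs_le_unit (q : List Move) (s : ℤ) :
    (endZ s q - s).natAbs ≤ q.count .a + q.count .c := by
  induction q generalizing s with
  | nil => simp [endZ]
  | cons m ms ih =>
    have h := ih (stepZ s m)
    rw [endZ]
    cases m <;> simp only [stepZ, List.count_cons] at h ⊢ <;> simp <;> omega

lemma length_eq_counts (p : List Move) :
    p.length = p.count .a + p.count .b + p.count .c + p.count .d := by
  induction p with
  | nil => simp
  | cons m ms ih => cases m <;> simp [List.count_cons, ih] <;> omega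

/-- If something below the minimum of the walk is covered, there must be a `d` move. -/
lemma d_mem_of_covered_below (p : List Move) (s z : ℤ) (hz : z ∈ covZ s p)
    (hlt : z < loZ s p) : Move.d ∈ p := by
  induction p generalizing s with
  | nil => exact absurd hz (by simp [covZ])
  | cons m ms ih =>
    rw [covZ] at hz
    rw [loZ] at hlt
    rcases hz with hz | hz
    · have h2 : z < s := lt_of_lt_of_le hlt (min_le_left _ _)
      cases m with
      | a =>
        exfalso
        have h3 : loZ (stepZ s .a) ms ≤ s - 1 := loZ_le_self _ _
        simp only [coversZ] at hz
        have := lt_of_lt_of_le hlt (min_le_right _ _)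
        omega
      | b => exfalso; simp [coversZ] at hz; omega
      | c => exfalso; simp [coversZ] at hz; omega
      | d => exact List.mem_cons_self
    · exact List.mem_cons_of_mem _ (ih _ hz (lt_of_lt_of_le hlt (min_le_right _ _)))

/-- If the maximum of the walk is covered, there must be a `b` move. -/
lemma b_mem_of_covered_top (p : List Move) (s z : ℤ) (hz : z ∈ covZ s p)
    (hge : hiZ s p ≤ z) : Move.b ∈ p := by
  induction p generalizing s with
  | nil => exact absurd hz (by simp [covZ])
  | cons m ms ih =>
    rw [covZ] at hz
    rw [hiZ] at hge
    rcases hz with hz | hz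
    · have h2 : s ≤ z := le_trans (le_max_left _ _) hge
      cases m with
      | a => exfalso; simp [coversZ] at hz; omega
      | d => exfalso; simp [coversZ] at hz; omega
      | b => exact List.mem_cons_self
      | c =>
        exfalso
        have h3 : s + 1 ≤ hiZ (stepZ s .c) ms := self_le_hiZ _ _
        simp only [coversZ] at hz
        have := le_trans (le_max_right _ _) hge
        omega
    · exact List.mem_cons_of_mem _ (ih _ hz (le_trans (le_max_right _ _) hge))

/- ### Split of the walk at two times -/

lemma three_split (p : List Move) (i j : ℕ) (hij : i ≤ j) (s : ℤ) :
    (endZ s (p.take i) - s).natAbs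
      + (endZ s (p.take j) - endZ s (p.take i)).natAbs
      + (endZ s p - endZ s (p.take j)).natAbs
      ≤ p.count .a + p.count .c := by
  have h1 : p.take j = p.take i ++ (p.take j).drop i := by
    conv_lhs => rw [← List.take_append_drop i (p.take j)]
    rw [List.take_take, min_eq_left hij]
  have h2 : p = p.take j ++ p.drop j := (List.take_append_drop j p).symm
  have e1 : endZ s (p.take j) = endZ (endZ s (p.take i)) ((p.take j).drop i) := by
    conv_lhs => rw [h1]
    rw [endZ_append]
  have e2 : endZ s p = endZ (endZ s (p.take j)) (p.drop j) := by
    conv_lhs => rw [h2]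
    rw [endZ_append]
  have c1 : ∀ m : Move, p.count m
      = (p.take i).count m + ((p.take j).drop i).count m + (p.drop j).count m := by
    intro m
    have d1 : p.count m = (p.take j).count m + (p.drop j).count m := by
      conv_lhs => rw [h2]
      rw [List.count_append]
    have d2 : (p.take j).count m = (p.take i).count m + ((p.take j).drop i).count m := by
      conv_lhs => rw [h1]
      rw [List.count_append]
    omega
  have n1 := natAbs_le_unit (p.take i) s
  have n2 := natAbs_le_unit ((p.take j).drop i) (endZ s (p.take i))
  have n3 := natAbs_le_unit (p.drop j) (endZ s (p.take j))
  rw [← e1] at n2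
  rw [← e2] at n3
  rw [c1 .a, c1 .c]
  omega

/- ### Window cardinality -/

lemma window_card (k : ℕ) [NeZero k] (A B : ℤ) (C : Set ℤ) (hC : C ⊆ Set.Icc A B)
    (hreps : ∀ r : ZMod k, ∃ z ∈ C, (z : ZMod k) = r) : (k : ℤ) ≤ B - A + 1 := by
  choose f hf1 hf2 using hreps
  have hinj : Set.InjOn f ↑(Finset.univ : Finset (ZMod k)) := by
    intro r1 _ r2 _ h
    rw [← hf2 r1, ← hf2 r2, h]
  have hmaps : ∀ r ∈ (Finset.univ : Finset (ZMod k)), f r ∈ Finset.Icc A B := by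
    intro r _
    have := hC (hf1 r)
    rwa [← Finset.coe_Icc, Finset.mem_coe] at this
  have hcard := Finset.card_le_card_of_injOn f hmaps hinj
  rw [Finset.card_univ, ZMod.card, Int.card_Icc] at hcard
  have h2 : ((k:ℤ)) ≤ ((B + 1 - A).toNat : ℤ) := by exact_mod_cast hcard
  rw [Int.toNat_eq_max] at h2
  have hk1 : 1 ≤ k := Nat.one_le_iff_ne_zero.mpr (NeZero.ne k)
  omega

/- ### Validity from a covered window -/

lemma valid_of_window (k : ℕ) [NeZero k] (p : List Move) (hne : p ≠ []) (A : ℤ)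
    (hcov : Set.Icc A (A + k - 1) ⊆ covZ 0 p) (x : ZMod k)
    (hend : ((endZ 0 p : ℤ) : ZMod k) = x) :
    ValidPath (Set.univ : Set (ZMod k)) 0 x p := by
  refine ⟨hne, ?_, ?_⟩
  · have h := cast_endZ (k := k) p 0
    rw [hend] at h
    have h0 : (((0:ℤ)) : ZMod k) = 0 := by norm_num
    rw [h0] at h
    exact h.symm
  · intro r _
    set z : ℤ := A + ((r - (A : ZMod k)).val : ℤ) with hz
    have hval : (r - (A : ZMod k)).val < k := ZMod.val_lt _
    have hnn : (0:ℤ) ≤ ((r - (A : ZMod k)).val : ℤ) := Int.ofNat_nonneg _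
    have hlt : ((r - (A : ZMod k)).val : ℤ) < (k:ℤ) := by exact_mod_cast hval
    have hzmem : z ∈ Set.Icc A (A + k - 1) := by
      rw [Set.mem_Icc]
      omega
    have hcast : ((z : ℤ) : ZMod k) = r := by
      simp only [hz]
      push_cast
      rw [ZMod.natCast_rightInverse _]
      ring
    have := mem_covZ_cast (k := k) p 0 z (hcov hzmem)
    rw [hcast] at this
    simpa using this

/- ### The lower bound -/

lemma lower_bound (k : ℕ) (hk : 4 ≤ k) (p : List Move)
    (hp : ValidPath (Set.univ : Set (ZMod k)) 0 ((k / 2 : ℕ) : ZMod k) p) :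
    k + k / 2 - 2 ≤ p.length := by
  haveI : NeZero k := ⟨by omega⟩
  obtain ⟨h, hh⟩ : ∃ h, h = k / 2 := ⟨_, rfl⟩
  obtain ⟨e, he⟩ : ∃ e, e = endZ 0 p := ⟨_, rfl⟩
  obtain ⟨H, hH⟩ : ∃ H, H = hiZ 0 p := ⟨_, rfl⟩
  obtain ⟨Lo, hLo⟩ : ∃ Lo, Lo = loZ 0 p := ⟨_, rfl⟩
  rw [← hh]
  have h0 : (((0:ℤ)) : ZMod k) = 0 := by norm_num
  have hend : ((e : ℤ) : ZMod k) = ((h : ℕ) : ZMod k) := by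
    rw [he, cast_endZ, h0, hh]; exact hp.2.1
  have hdvd : (k:ℤ) ∣ e - (h:ℤ) := by
    rw [← ZMod.intCast_zmod_eq_zero_iff_dvd]
    push_cast
    rw [hend]
    push_cast
    ring
  have hreps : ∀ r : ZMod k, ∃ z ∈ covZ 0 p, ((z:ℤ) : ZMod k) = r := by
    intro r
    have hr : r ∈ coveredSet (0 : ZMod k) p := hp.2.2 (Set.mem_univ r)
    rw [← h0] at hr
    obtain ⟨z, hz, hcast⟩ := coveredSet_subset_cast p 0 hr
    exact ⟨z, hz, hcast⟩
  have hLo0 : Lo ≤ 0 := hLo ▸ loZ_le_self p 0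
  have hH0 : (0:ℤ) ≤ H := hH ▸ self_le_hiZ p 0
  have hLe : Lo ≤ e := he ▸ hLo ▸ loZ_le_endZ p 0
  have heH : e ≤ H := he ▸ hH ▸ endZ_le_hiZ p 0
  have hsub : covZ 0 p ⊆ Set.Icc (Lo - 1) H := hLo ▸ hH ▸ covZ_subset p 0
  have hkey : ∃ sb sd : ℕ, sb ≤ 1 ∧ sd ≤ 1 ∧ sb ≤ p.count .b ∧ sd ≤ p.count .d ∧
      (k:ℤ) ≤ (H - Lo) + sb + sd := by
    by_cases hd : (Lo - 1) ∈ covZ 0 p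
    · have hcd : 1 ≤ p.count .d := by
        rw [List.one_le_count_iff]
        exact d_mem_of_covered_below p 0 _ hd (by rw [← hLo]; omega)
      by_cases hb : H ∈ covZ 0 p
      · have hcb : 1 ≤ p.count .b := by
          rw [List.one_le_count_iff]
          exact b_mem_of_covered_top p 0 H hb (le_of_eq hH.symm)
        have hw := window_card k (Lo - 1) H _ hsub hreps
        exact ⟨1, 1, le_refl _, le_refl _, hcb, hcd, by push_cast; omega⟩
      · have hsub2 : covZ 0 p ⊆ Set.Icc (Lo - 1) (H - 1) := by
          intro z hz
          have h1 := hsub hz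
          rw [Set.mem_Icc] at h1 ⊢
          have hne : z ≠ H := fun hzH => hb (hzH ▸ hz)
          omega
        have hw := window_card k (Lo - 1) (H - 1) _ hsub2 hreps
        exact ⟨0, 1, by omega, le_refl _, by omega, hcd, by push_cast; omega⟩
    · by_cases hb : H ∈ covZ 0 p
      · have hcb : 1 ≤ p.count .b := by
          rw [List.one_le_count_iff]
          exact b_mem_of_covered_top p 0 H hb (le_of_eq hH.symm)
        have hsub2 : covZ 0 p ⊆ Set.Icc Lo H := by
          intro z hz
          have h1 := hsub hz
          rw [Set.mem_Icc] at h1 ⊢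
          have hne : z ≠ Lo - 1 := fun hzL => hd (hzL ▸ hz)
          omega
        have hw := window_card k Lo H _ hsub2 hreps
        exact ⟨1, 0, le_refl _, by omega, hcb, by omega, by push_cast; omega⟩
      · have hsub2 : covZ 0 p ⊆ Set.Icc Lo (H - 1) := by
          intro z hz
          have h1 := hsub hz
          rw [Set.mem_Icc] at h1 ⊢
          have hne : z ≠ Lo - 1 := fun hzL => hd (hzL ▸ hz)
          have hne2 : z ≠ H := fun hzH => hb (hzH ▸ hz)
          omega
        have hw := window_card k Lo (H - 1) _ hsub2 hreps
        exact ⟨0, 0, by omega, by omega, by omega, by omega, by push_cast; omega⟩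
  obtain ⟨sb, sd, hsb1, hsd1, hsbc, hsdc, hksum⟩ := hkey
  have lenc := length_eq_counts p
  obtain ⟨i, hile, hieq⟩ := exists_take_hiZ p 0
  obtain ⟨j, hjle, hjeq⟩ := exists_take_loZ p 0
  rw [← hH] at hieq
  rw [← hLo] at hjeq
  obtain ⟨t, ht⟩ := hdvd
  have hts : t ≤ -2 ∨ t = -1 ∨ t = 0 ∨ 1 ≤ t := by omega
  have hebound : e ≤ (h:ℤ) - 2 * k ∨ e = (h:ℤ) - k ∨ e = (h:ℤ) ∨ (h:ℤ) + k ≤ e := by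
    rcases hts with ht2 | ht2 | ht2 | ht2
    · left
      have : (k:ℤ) * t ≤ (k:ℤ) * (-2) :=
        mul_le_mul_of_nonneg_left ht2 (by positivity)
      omega
    · right; left; rw [ht2] at ht; omega
    · right; right; left; rw [ht2] at ht; omega
    · right; right; right
      have : (k:ℤ) * 1 ≤ (k:ℤ) * t :=
        mul_le_mul_of_nonneg_left ht2 (by positivity)
      omega
  have hh2 : 2 * h ≤ k := by omega
  have hhk : h ≤ k := by omega
  rcases le_total i j with hij | hij
  · have hU := three_split p i j hij 0
    rw [hieq, hjeq, ← he] at hU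
    have f1 : ((H - 0).natAbs : ℤ) = H := by omega
    have f2 : ((Lo - H).natAbs : ℤ) = H - Lo := by omega
    have f3 : ((e - Lo).natAbs : ℤ) = e - Lo := by omega
    rcases hebound with hE | hE | hE | hE <;> omega
  · have hU := three_split p j i hij 0
    rw [hjeq, hieq, ← he] at hU
    have f1 : ((Lo - 0).natAbs : ℤ) = -Lo := by omega
    have f2 : ((H - Lo).natAbs : ℤ) = H - Lo := by omega
    have f3 : ((e - H).natAbs : ℤ) = H - e := by omega
    rcases hebound with hE | hE | hE | hE <;> omega

/- ### Constructions -/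

lemma path_mid (k v : ℕ) (hk : 4 ≤ k) (hv2 : 2 ≤ v) (hvk : v < k) :
    ∃ p : List Move, ValidPath (Set.univ : Set (ZMod k)) 0 ((v : ℕ) : ZMod k) p ∧
      p.length = k + v - 2 := by
  haveI : NeZero k := ⟨by omega⟩
  refine ⟨.b :: (List.replicate (k-2) .a ++ (.d :: List.replicate (v-2) .c)), ?_, ?_⟩
  · have hendr : endZ 0 (List.replicate (k-2) Move.a) = -((k:ℤ) - 2) := by
      rw [endZ_replicate_a]
      push_cast [Nat.cast_sub (by omega : 2 ≤ k)]
      ring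
    apply valid_of_window k _ (by simp) (1 - (k:ℤ))
    · intro z hz
      rw [Set.mem_Icc] at hz
      show z ∈ covZ 0 _
      rw [covZ]
      simp only [coversZ, stepZ, covZ_append, hendr, covZ, covZ_replicate_a,
        covZ_replicate_c, endZ_replicate_a]
      simp only [Set.mem_insert_iff, Set.mem_union, Set.mem_Ico]
      push_cast [Nat.cast_sub (by omega : 2 ≤ k), Nat.cast_sub (by omega : 2 ≤ v)]
      omega
    · have : endZ 0 (.b :: (List.replicate (k-2) .a ++ (.d :: List.replicate (v-2) .c)))
          = (v : ℤ) - k := by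
        rw [endZ]
        show endZ 0 _ = _
        rw [endZ_append, hendr, endZ]
        show endZ (-((k:ℤ) - 2)) _ = _
        rw [endZ_replicate_c]
        push_cast [Nat.cast_sub (by omega : 2 ≤ v)]
        ring
      rw [this]
      push_cast
      simp [ZMod.natCast_self]
  · simp only [List.length_cons, List.length_append, List.length_replicate]
    omega

lemma exists_path_le (k : ℕ) (hk : 4 ≤ k) (x : ZMod k) :
    ∃ p : List Move, ValidPath (Set.univ : Set (ZMod k)) 0 x p ∧
      p.length ≤ k + k / 2 - 2 := by
  haveI : NeZero k := ⟨by omega⟩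
  have hxv : ((x.val : ℕ) : ZMod k) = x := ZMod.natCast_rightInverse x
  have hvlt : x.val < k := ZMod.val_lt x
  rcases Nat.lt_or_ge x.val 2 with hv2 | hv2
  · rcases Nat.lt_or_ge x.val 1 with hv0 | hv1
    · -- x.val = 0
      refine ⟨List.replicate k .c, ?_, by simp; omega⟩
      apply valid_of_window k _ (by simp; omega) 0
      · intro z hz
        rw [Set.mem_Icc] at hz
        rw [covZ_replicate_c]
        rw [Set.mem_Ico]
        omega
      · rw [endZ_replicate_c]
        have hx0 : x = 0 := by
          rw [← hxv]
          have : x.val = 0 := by omega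
          rw [this]; simp
        rw [hx0]
        push_cast
        simp [ZMod.natCast_self]
    · -- x.val = 1
      have hv1' : x.val = 1 := by omega
      refine ⟨.b :: List.replicate (k-1) .a, ?_, by simp; omega⟩
      apply valid_of_window k _ (by simp) (1 - (k:ℤ))
      · intro z hz
        rw [Set.mem_Icc] at hz
        rw [covZ]
        simp only [coversZ, stepZ, covZ_replicate_a]
        simp only [Set.mem_insert_iff, Set.mem_Ico]
        push_cast [Nat.cast_sub (by omega : 1 ≤ k)]
        omega
      · rw [endZ]
        show ((endZ 0 (List.replicate (k-1) .a) : ℤ) : ZMod k) = x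
        rw [endZ_replicate_a]
        have hcast : ((0 - ((k-1:ℕ):ℤ) : ℤ) : ZMod k) = ((1:ℕ) : ZMod k) := by
          have hkz : ((k:ℕ) : ZMod k) = 0 := ZMod.natCast_self k
          push_cast [Nat.cast_sub (by omega : 1 ≤ k)]
          rw [hkz]
          ring
        rw [hcast, ← hv1', hxv]
  · rcases Nat.lt_or_ge (k/2) x.val with hvh | hvh
    · rcases Nat.lt_or_ge x.val (k-1) with hvk1 | hvk1
      · -- k/2 < v ≤ k - 2
        refine ⟨.d :: (List.replicate (k-2) .c ++ (.b :: List.replicate (k-2-x.val) .a)),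
          ?_, by simp; omega⟩
        have hendr : endZ 0 (List.replicate (k-2) Move.c) = (k:ℤ) - 2 := by
          rw [endZ_replicate_c]
          push_cast [Nat.cast_sub (by omega : 2 ≤ k)]
          ring
        apply valid_of_window k _ (by simp) (-1)
        · intro z hz
          rw [Set.mem_Icc] at hz
          rw [covZ]
          simp only [coversZ, stepZ, covZ_append, hendr, covZ, covZ_replicate_a,
            covZ_replicate_c, endZ_replicate_c]
          simp only [Set.mem_insert_iff, Set.mem_union, Set.mem_Ico]
          push_cast [Nat.cast_sub (by omega : 2 ≤ k),
            Nat.cast_sub (by omega : x.val ≤ k - 2)]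
          omega
        · rw [endZ]
          show ((endZ 0 (List.replicate (k-2) .c ++ (.b :: List.replicate (k-2-x.val) .a)) : ℤ) : ZMod k) = x
          rw [endZ_append, hendr, endZ]
          show ((endZ ((k:ℤ) - 2) (List.replicate (k-2-x.val) .a) : ℤ) : ZMod k) = x
          rw [endZ_replicate_a]
          have : (k:ℤ) - 2 - ((k-2-x.val : ℕ) : ℤ) = (x.val : ℤ) := by
            push_cast [Nat.cast_sub (by omega : x.val ≤ k - 2),
              Nat.cast_sub (by omega : 2 ≤ k)]
            ring
          rw [this]
          push_cast
          exact hxv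
      · -- v = k - 1
        have hv : x.val = k - 1 := by omega
        refine ⟨.d :: List.replicate (k-1) .c, ?_, by simp; omega⟩
        apply valid_of_window k _ (by simp) (-1)
        · intro z hz
          rw [Set.mem_Icc] at hz
          rw [covZ]
          simp only [coversZ, stepZ, covZ_replicate_c]
          simp only [Set.mem_insert_iff, Set.mem_Ico]
          push_cast [Nat.cast_sub (by omega : 1 ≤ k)]
          omega
        · rw [endZ]
          show ((endZ 0 (List.replicate (k-1) .c) : ℤ) : ZMod k) = x
          rw [endZ_replicate_c]
          have hcast : ((0 + ((k-1:ℕ):ℤ) : ℤ) : ZMod k) = ((k-1:ℕ) : ZMod k) := by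
            push_cast
            ring
          rw [hcast, ← hv, hxv]
    · obtain ⟨p, hp, hlen⟩ := path_mid k x.val hk hv2 hvlt
      rw [hxv] at hp
      exact ⟨p, hp, by omega⟩

/-- for k ≥ 4, the maximum over all pairs (B, x) ≠ (∅, 0) of the
minimum length of a valid path from 0 to x covering B equals k + ⌊k/2⌋ − 2. -/
theorem diameter_large_k (k : ℕ) (hk : 4 ≤ k) :
    IsGreatest
      {L : ℕ | ∃ (B : Set (ZMod k)) (x : ZMod k), ¬(B = ∅ ∧ x = 0) ∧
        L = sInf {m : ℕ | ∃ p : List Move, ValidPath B 0 x p ∧ p.length = m}}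
      (k + k / 2 - 2) := by
  haveI : NeZero k := ⟨by omega⟩
  constructor
  · refine ⟨Set.univ, ((k / 2 : ℕ) : ZMod k), ?_, ?_⟩
    · rintro ⟨h1, -⟩
      exact Set.univ_nonempty.ne_empty h1
    · obtain ⟨p, hp, hlen⟩ := path_mid k (k / 2) hk (by omega) (by omega)
      have hmem : k + k / 2 - 2 ∈
          {m : ℕ | ∃ q : List Move,
            ValidPath (Set.univ : Set (ZMod k)) 0 ((k / 2 : ℕ) : ZMod k) q ∧ q.length = m} :=
        ⟨p, hp, hlen⟩
      refine (Nat.le_antisymm (Nat.sInf_le hmem) (le_csInf ⟨_, hmem⟩ ?_)).symm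
      rintro m ⟨q, hq, rfl⟩
      exact lower_bound k hk q hq
  · rintro L ⟨B, x, -, rfl⟩
    obtain ⟨p, hp, hlen⟩ := exists_path_le k hk x
    have hvalid : ValidPath B 0 x p :=
      ⟨hp.1, hp.2.1, fun b _ => hp.2.2 (Set.mem_univ b)⟩
    exact le_trans (Nat.sInf_le ⟨p, hvalid, rfl⟩) hlen
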